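/- Let h be m-times continuously differentiable near a point x* with h(x*) = x* and h'(x*) = 0. For k < m, define h_k as the k-fold composition of h with itself (h_k = h ∘ h ∘ ... ∘ h, k times). Then h_k(x*) = x* and all derivatives of h_k at x* of order 1 through k vanish: h_k^{(i)}(x*) = 0 for 1 ≤ i ≤ k. -/

import Mathlib

open Set Function

/-- A continuous multilinear map `ℝⁿ → ℝ` vanishing on the all-ones vector is zero. -/
lemma multilin_eq_zero {n : ℕ} (f : ContinuousMultilinearMap ℝ (fun _ : Fin n ↦ ℝ) ℝ)
    (hf : f (fun _ ↦ 1) = 0) : f = 0 := by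
  refine ContinuousMultilinearMap.ext (fun v ↦ ?_)
  have := f.map_smul_univ v (fun _ ↦ 1)
  simp only [smul_eq_mul, mul_one] at this
  show f (fun i ↦ v i) = 0
  rw [this, hf, mul_zero]

lemma taylorComp_eq_zero (q p : FormalMultilinearSeries ℝ ℝ ℝ) (j : ℕ)
    (hq : q 1 = 0) (hp : ∀ i, 1 ≤ i → i ≤ j → p i = 0) :
    ∀ n, 1 ≤ n → n ≤ j + 1 → q.taylorComp p n = 0 := by
  intro n hn1 hnj
  show ∑ c : OrderedFinpartition n, q.compAlongOrderedFinpartition p c = 0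
  apply Finset.sum_eq_zero
  intro c _
  by_cases hc : ∃ i, c.partSize i ≤ j
  · obtain ⟨i, hi⟩ := hc
    have hpz : p (c.partSize i) = 0 := hp _ (c.partSize_pos i) hi
    ext v
    rw [FormalMultilinearSeries.compAlongOrderedFinpartition_apply]
    refine Eq.trans ((q c.length).map_coord_zero i ?_) (by simp)
    rw [c.applyOrderedFinpartition_apply]
    simp [hpz]
  · push_neg at hc
    have hsum : ∑ m : Fin c.length, c.partSize m = n := by
      have := c.sum_sigma_eq_sum (fun _ ↦ (1 : ℕ))
      simpa using this
    have hlen : c.length = 1 := by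
      rcases Nat.lt_or_ge c.length 2 with h2 | h2
      · have := c.length_pos (by omega)
        omega
      · exfalso
        have : ∑ m : Fin c.length, c.partSize m ≥ ∑ _m : Fin c.length, (j + 1) :=
          Finset.sum_le_sum (fun i _ ↦ hc i)
        simp only [Finset.sum_const, Finset.card_univ, Fintype.card_fin, smul_eq_mul] at this
        have h3 : 2 * (j + 1) ≤ c.length * (j + 1) := Nat.mul_le_mul_right _ h2
        omega
    have h0 : q c.length = 0 := by rw [hlen]; exact hq
    ext v
    rw [FormalMultilinearSeries.compAlongOrderedFinpartition_apply, h0]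
    simp

theorem stmt_1 (m k : ℕ) (hk : k < m) (xs : ℝ) (h : ℝ → ℝ)
    (hsm : ContDiffAt ℝ (m : ℕ∞) h xs) (hfix : h xs = xs) (hd : deriv h xs = 0) :
    h^[k] xs = xs ∧ ∀ i, 1 ≤ i → i ≤ k → iteratedDeriv i (h^[k]) xs = 0 := by
  -- get an open set on which h is C^m
  obtain ⟨u, hu_nhds, hu_cd⟩ := hsm.contDiffOn le_rfl (by simp)
  obtain ⟨v, hvu, hv_open, hxv⟩ := mem_nhds_iff.1 hu_nhds
  have hv_cd : ContDiffOn ℝ (m : ℕ∞) h v := hu_cd.mono hvu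
  set q : ℝ → FormalMultilinearSeries ℝ ℝ ℝ := ftaylorSeriesWithin ℝ h v with hq_def
  have hq : HasFTaylorSeriesUpToOn (m : ℕ∞) h q v :=
    hv_cd.ftaylorSeriesWithin hv_open.uniqueDiffOn
  have hq1 : q xs 1 = 0 := by
    apply multilin_eq_zero
    have e1 : q xs 1 = iteratedFDeriv ℝ 1 h xs := iteratedFDerivWithin_of_isOpen 1 hv_open hxv
    rw [e1, ← iteratedDeriv_eq_iteratedFDeriv, iteratedDeriv_one, hd]
  -- the main induction
  have main : ∀ k : ℕ, ∃ (s : Set ℝ) (p : ℝ → FormalMultilinearSeries ℝ ℝ ℝ),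
      IsOpen s ∧ xs ∈ s ∧ HasFTaylorSeriesUpToOn (m : ℕ∞) (h^[k]) p s ∧
      ∀ i, 1 ≤ i → i ≤ k → p xs i = 0 := by
    intro k
    induction k with
    | zero =>
        refine ⟨univ, ftaylorSeriesWithin ℝ id univ, isOpen_univ, mem_univ _, ?_, by omega⟩
        rw [Function.iterate_zero]
        exact contDiff_id.contDiffOn.ftaylorSeriesWithin uniqueDiffOn_univ
    | succ k IH =>
        obtain ⟨s, p, hso, hxs, hps, hflat⟩ := IH
        have hfixk : h^[k] xs = xs := Function.iterate_fixed hfix k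
        have hcont : ContinuousOn (h^[k]) s := hps.continuousOn
        refine ⟨s ∩ (h^[k]) ⁻¹' v, fun x ↦ (q (h^[k] x)).taylorComp (p x),
          hcont.isOpen_inter_preimage hso hv_open,
          ⟨hxs, by simp [hfixk, hxv]⟩, ?_, ?_⟩
        · have hmaps : MapsTo (h^[k]) (s ∩ (h^[k]) ⁻¹' v) v := fun x hx ↦ hx.2
          have := hq.comp (hps.mono inter_subset_left) hmaps
          rwa [Function.iterate_succ' h k]
        · intro i hi1 hik
          simp only [hfixk]
          exact taylorComp_eq_zero (q xs) (p xs) k hq1 hflat i hi1 hik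
  refine ⟨Function.iterate_fixed hfix k, ?_⟩
  intro i hi1 hik
  obtain ⟨s, p, hso, hxs, hps, hflat⟩ := main k
  have him : (i : ℕ∞) ≤ (m : ℕ∞) := by exact_mod_cast (hik.trans hk.le)
  have e1 : p xs i = iteratedFDerivWithin ℝ i (h^[k]) s xs :=
    hps.eq_iteratedFDerivWithin_of_uniqueDiffOn (by exact_mod_cast him) hso.uniqueDiffOn hxs
  have e2 : iteratedFDerivWithin ℝ i (h^[k]) s xs = iteratedFDeriv ℝ i (h^[k]) xs :=
    iteratedFDerivWithin_of_isOpen i hso hxs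
  rw [iteratedDeriv_eq_iteratedFDeriv, ← e2, ← e1, hflat i hi1 hik]
  simp
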